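/- Let G be a finite group, K a normal subgroup, H ≤ G with G = KH, and χ ∈ Irr(G) with K ≤ Ker χ. If τ ∈ Irr(G) satisfies K ≤ Ker τ and the restrictions τ_H and χ_H have a common irreducible constituent θ with χ_H = θ irreducible, then τ = χ. -/

import Mathlib

open Module

/-- An irreducible finite-dimensional complex representation of `G`,
    standing in for an irreducible character of `G`. -/
structure IrrRep (k : Type) [Field k] (G : Type*) [Group G] where
  V : Type
  [isAddCommGroup : AddCommGroup V]
  [isModule : Module k V]
  [isFinDim : FiniteDimensional k V]
  [isNontrivial : Nontrivial V]
  ρ : Representation k G V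
  irreducible : ∀ U : Submodule k V, (∀ g : G, ∀ x ∈ U, ρ g x ∈ U) → U = ⊥ ∨ U = ⊤

attribute [instance] IrrRep.isAddCommGroup IrrRep.isModule IrrRep.isFinDim IrrRep.isNontrivial

namespace IrrRep

variable {k : Type} [Field k] {G : Type*} [Group G]

/-- The degree `χ(1)` of the character. -/
noncomputable def degree (W : IrrRep k G) : ℕ := finrank k W.V

/-- The character `χ : G → k`. -/
noncomputable def char (W : IrrRep k G) : G → k := fun g => LinearMap.trace k W.V (W.ρ g)

/-- The kernel `Ker χ` of the character. -/
def ker (W : IrrRep k G) : Subgroup G := MonoidHom.ker W.ρ.asGroupHom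

/-- The codegree `cod χ = |G : Ker χ| / χ(1)`. -/
noncomputable def cod (W : IrrRep k G) : ℕ := W.ker.index / W.degree

end IrrRep

/-- `K` is `p`-nilpotent: it has a normal `p`-complement. -/
def IsPNilpotent (p : ℕ) (K : Type*) [Group K] : Prop :=
  ∃ H : Subgroup K, H.Normal ∧ Nat.Coprime (Nat.card H) p ∧ ∃ m : ℕ, H.index = p ^ m

/-- `K` is `p`-solvable: it has a subnormal series each of whose factors is a
`p`-group or a `p'`-group. -/
def IsPSolvable (p : ℕ) (K : Type*) [Group K] : Prop :=
  ∃ (n : ℕ) (s : Fin (n + 1) → Subgroup K), s 0 = ⊥ ∧ s (Fin.last n) = ⊤ ∧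
    ∀ i : Fin n, s i.castSucc ≤ s i.succ ∧ ((s i.castSucc).subgroupOf (s i.succ)).Normal ∧
      ((∃ m : ℕ, (s i.castSucc).relIndex (s i.succ) = p ^ m) ∨
        Nat.Coprime ((s i.castSucc).relIndex (s i.succ)) p)

/-- The solvable radical `Sol(G)`: the largest solvable normal subgroup. -/
def solvableRadical (G : Type*) [Group G] : Subgroup G :=
  ⨆ H ∈ {H : Subgroup G | H.Normal ∧ IsSolvable H}, H

/-- `O_{p',p}(Sol(G))`: the largest solvable `p`-nilpotent normal subgroup of `G`. -/
def OppSol (p : ℕ) (G : Type*) [Group G] : Subgroup G :=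
  ⨆ H ∈ {H : Subgroup G | H.Normal ∧ IsSolvable H ∧ IsPNilpotent p H}, H

/-- The usual inner product of class functions on a finite group. -/
noncomputable def innerChar (H : Type*) [Group H] [Finite H] (f g : H → ℂ) : ℂ :=
  (Nat.card H : ℂ)⁻¹ * ∑ᶠ h : H, f h * (starRingEnd ℂ) (g h)


section AuxiliaryLemmas

open Matrix ComplexOrder in
/-- If `A ^ n = 1` and `A * B = 1` (so `B = A⁻¹`), then `trace B = conj (trace A)`.
Proved via the positive definite matrix `P = ∑ (A^k)ᴴ A^k`, which satisfies `Aᴴ P A = P`,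
so that `B = P⁻¹ Aᴴ P` and hence `trace B = trace Aᴴ`. -/
lemma trace_inv_eq_star_trace {m : Type} [Fintype m] [DecidableEq m] {n : ℕ} (hn : n ≠ 0)
    (A B : Matrix m m ℂ) (hA : A ^ n = 1) (hAB : A * B = 1) :
    B.trace = star A.trace := by
  classical
  set f : ℕ → Matrix m m ℂ := fun k => (A ^ k)ᴴ * A ^ k with hf
  set P : Matrix m m ℂ := ∑ k ∈ Finset.range n, f k with hPdef
  have hf0 : f 0 = 1 := by simp [hf]
  have hfn : f n = 1 := by simp only [hf]; rw [hA]; simp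
  have hPd : P.PosDef := by
    have h0 : (0:ℕ) ∈ Finset.range n := by simpa using Nat.pos_of_ne_zero hn
    have hsplit : P = f 0 + ∑ k ∈ (Finset.range n).erase 0, f k :=
      (Finset.add_sum_erase _ f h0).symm
    rw [hsplit, hf0]
    refine Matrix.PosDef.add_posSemidef ?_ ?_
    · simpa using Matrix.PosDef.natCast (R := ℂ) (n := m) 1 one_ne_zero
    · exact Finset.sum_induction _ _ (fun a b ha hb => ha.add hb) Matrix.PosSemidef.zero
        (fun i _ => Matrix.posSemidef_conjTranspose_mul_self _)
  have hP : Aᴴ * P * A = P := by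
    have h3 : Aᴴ * P * A = ∑ k ∈ Finset.range n, f (k + 1) := by
      rw [hPdef, Finset.mul_sum, Finset.sum_mul]
      refine Finset.sum_congr rfl fun k _ => ?_
      simp only [hf, pow_succ, Matrix.conjTranspose_mul, Matrix.mul_assoc]
    rw [h3]
    have h4 := (Finset.sum_range_succ' f n).symm.trans (Finset.sum_range_succ f n)
    rw [hf0, hfn] at h4
    exact add_right_cancel h4
  letI := hPd.isUnit.invertible
  have hPB : P * B = Aᴴ * P := by
    calc P * B = (Aᴴ * P * A) * B := by rw [hP]
    _ = Aᴴ * P * (A * B) := by rw [Matrix.mul_assoc]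
    _ = Aᴴ * P := by rw [hAB, Matrix.mul_one]
  have hB : B = ⅟P * (Aᴴ * P) := by
    rw [← hPB, ← Matrix.mul_assoc, invOf_mul_self, Matrix.one_mul]
  rw [hB, Matrix.trace_mul_comm, Matrix.mul_assoc, mul_invOf_self, Matrix.mul_one,
    Matrix.trace_conjTranspose]

/-- For a finite group, `conj (χ(g)) = χ(g⁻¹)`. -/
lemma IrrRep.star_char {G : Type*} [Group G] [Fintype G] (W : IrrRep ℂ G) (g : G) :
    (starRingEnd ℂ) (W.char g) = W.char g⁻¹ := by
  classical
  let b := Module.finBasis ℂ W.V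
  let E := LinearMap.toMatrixAlgEquiv b
  have hE : ∀ f : W.V →ₗ[ℂ] W.V, E f = LinearMap.toMatrix b b f := fun _ => rfl
  have hA : E (W.ρ g) ^ Fintype.card G = 1 := by
    rw [← map_pow, ← map_pow, pow_card_eq_one, map_one, map_one]
  have hAB : E (W.ρ g) * E (W.ρ g⁻¹) = 1 := by
    rw [← map_mul, ← map_mul, mul_inv_cancel, map_one, map_one]
  have key := trace_inv_eq_star_trace Fintype.card_ne_zero _ _ hA hAB
  have h1 : W.char g = (E (W.ρ g)).trace := by
    rw [hE]; exact LinearMap.trace_eq_matrix_trace ℂ b _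
  have h2 : W.char g⁻¹ = (E (W.ρ g⁻¹)).trace := by
    rw [hE]; exact LinearMap.trace_eq_matrix_trace ℂ b _
  rw [h1, h2, key, starRingEnd_apply]

open CategoryTheory in
/-- An `IrrRep` gives a simple object of `FDRep`. -/
lemma IrrRep.simple_fdRep {G : Type} [Group G] (W : IrrRep ℂ G) :
    Simple (FDRep.of W.ρ) := by
  constructor
  intro Y f hm
  have happ : ∀ (g : G) (y : Y), f.hom (Y.ρ g y) = W.ρ g (f.hom y) := fun g y =>
    by
      have h := congrArg (fun φ => φ.hom.hom y) (f.comm g)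
      exact h
  constructor
  · intro hiso h0
    obtain ⟨x, hx⟩ := exists_ne (0 : W.V)
    have h1 := LinearMap.ext_iff.1 (congrArg (fun φ => φ.hom.hom.hom) (IsIso.inv_hom_id f)) x
    have hhom : f.hom = 0 := by rw [h0, Action.zero_hom]
    rw [Action.comp_hom, Action.id_hom] at h1
    have h2 : f.hom ((inv f).hom x) = x := h1
    rw [hhom] at h2
    exact hx (h2.symm.trans rfl)
  · intro hne
    have hUinv : ∀ g : G, ∀ x ∈ LinearMap.ker f.hom.hom.hom, Y.ρ g x ∈ LinearMap.ker f.hom.hom.hom := by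
      intro g x hx
      rw [LinearMap.mem_ker] at hx ⊢
      exact (happ g x).trans (by rw [show f.hom x = 0 from hx, map_zero])
    let ρZ : Representation ℂ G (LinearMap.ker f.hom.hom.hom) :=
      { toFun := fun g => (Y.ρ g).restrict (hUinv g)
        map_one' := by ext x; simp [LinearMap.restrict_apply]
        map_mul' := fun g h => by
          ext x
          show Y.ρ (g * h) x.1 = Y.ρ g (Y.ρ h x.1)
          rw [map_mul]
          rfl }
    let Z : FDRep ℂ G := FDRep.of ρZ
    let ι : Z ⟶ Y := ⟨FGModuleCat.ofHom ((LinearMap.ker f.hom.hom.hom).subtype : _ →ₗ[ℂ] _), fun g => by ext x; rfl⟩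
    have hι : ι ≫ f = (0 : Z ⟶ Y) ≫ f := by
      rw [Limits.zero_comp]
      apply Action.hom_ext
      refine FGModuleCat.hom_ext (LinearMap.ext ?_)
      intro x
      show f.hom ((LinearMap.ker f.hom.hom.hom).subtype x) = (0 : Z ⟶ FDRep.of W.ρ).hom x
      rw [Action.zero_hom]
      exact x.2
    have hι0 : ι = (0 : Z ⟶ Y) := (cancel_mono f).1 hι
    have hinj : Function.Injective f.hom := by
      rw [← LinearMap.ker_eq_bot]
      rw [Submodule.eq_bot_iff]
      intro x hx
      have h3 : ι.hom.hom.hom = 0 := congrArg (fun φ => φ.hom.hom.hom) hι0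
      have h4 : ((LinearMap.ker f.hom.hom.hom).subtype : _ →ₗ[ℂ] _) (⟨x, hx⟩ : LinearMap.ker f.hom.hom.hom)
          = 0 := by
        rw [show ((LinearMap.ker f.hom.hom.hom).subtype : _ →ₗ[ℂ] _) = ι.hom.hom.hom from rfl, h3]; rfl
      simpa using h4
    have hsurj : Function.Surjective f.hom := by
      have hr := W.irreducible (LinearMap.range f.hom.hom.hom) (by
        intro g x hx
        obtain ⟨y, rfl⟩ := hx
        exact ⟨Y.ρ g y, happ g y⟩)
      rcases hr with h | h
      · exfalso
        apply hne
        apply Action.hom_ext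
        refine FGModuleCat.hom_ext (LinearMap.ext ?_)
        intro y
        have hy : f.hom y ∈ LinearMap.range f.hom.hom.hom := ⟨y, rfl⟩
        rw [h] at hy
        exact (show f.hom y = 0 by simpa using hy)
      · rw [← LinearMap.range_eq_top]
        exact h
    let e := LinearEquiv.ofBijective f.hom.hom.hom ⟨hinj, hsurj⟩
    have hsymm : ∀ x, f.hom (e.symm x) = x := fun x => e.apply_symm_apply x
    refine ⟨⟨⟨FGModuleCat.ofHom (e.symm : _ →ₗ[ℂ] _), fun g => ?_⟩, ?_, ?_⟩⟩
    · refine FGModuleCat.hom_ext (LinearMap.ext ?_)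
      intro x
      apply hinj
      show f.hom (e.symm ((FDRep.of W.ρ).ρ g x)) = f.hom (Y.ρ g (e.symm x))
      rw [hsymm, happ, hsymm]
      rfl
    · apply Action.hom_ext
      refine FGModuleCat.hom_ext (LinearMap.ext ?_)
      intro y
      show e.symm (f.hom y) = y
      exact e.symm_apply_apply y
    · apply Action.hom_ext
      refine FGModuleCat.hom_ext (LinearMap.ext ?_)
      intro x
      show f.hom (e.symm x) = x
      exact hsymm x

/-- Counting lemma: since `G = KH` (with `K` normal), summing a function which is
left-`K`-invariant over `G` is the same as summing over `H`, up to the index factors. -/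
lemma card_inf_mul_sum_eq {G : Type} [Group G] [Fintype G]
    (K H : Subgroup G) (hKn : K.Normal) (hKH : K ⊔ H = ⊤)
    [Fintype ↥K] [Fintype ↥H] (F : G → ℂ)
    (hF : ∀ (kk : K) (hh : H), F ((kk : G) * (hh : G)) = F hh) :
    (Nat.card ↥(K ⊓ H) : ℂ) * ∑ g : G, F g = (Nat.card ↥K : ℂ) * ∑ h : H, F h := by
  classical
  haveI : Fintype ↥(K ⊓ H) := Fintype.ofFinite _
  set φ : K × H → G := fun p => (p.1 : G) * (p.2 : G) with hφ
  have hsurj : Function.Surjective φ := by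
    intro g
    have hg : g ∈ (↑(K ⊔ H) : Set G) := by rw [hKH]; trivial
    rw [Subgroup.normal_mul] at hg
    obtain ⟨k, hk, h, hh, hkh⟩ := hg
    exact ⟨(⟨k, hk⟩, ⟨h, hh⟩), hkh⟩
  have key : ∀ g : G, (Finset.univ.filter (fun p : K × H => φ p = g)).card
      = Fintype.card ↥(K ⊓ H) := by
    intro g
    rw [← Fintype.card_subtype]
    obtain ⟨⟨k₀, h₀⟩, hp⟩ := hsurj g
    have hpg : (k₀ : G) * (h₀ : G) = g := hp
    refine Fintype.card_congr ?_
    refine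
      { toFun := fun q => ⟨(k₀ : G)⁻¹ * (q.1.1 : G), ?_⟩
        invFun := fun x => ⟨(⟨(k₀ : G) * (x : G), mul_mem k₀.2 (Subgroup.mem_inf.mp x.2).1⟩,
          ⟨(x : G)⁻¹ * (h₀ : G), mul_mem (inv_mem (Subgroup.mem_inf.mp x.2).2) h₀.2⟩), ?_⟩
        left_inv := fun q => ?_
        right_inv := fun x => ?_ }
    case refine_1 =>
      have hq : (q.1.1 : G) * (q.1.2 : G) = g := q.2
      have hH : (k₀ : G)⁻¹ * (q.1.1 : G) = (h₀ : G) * (q.1.2 : G)⁻¹ := by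
        rw [inv_mul_eq_iff_eq_mul, ← mul_assoc, eq_comm, mul_inv_eq_iff_eq_mul, hq, hpg]
      refine Subgroup.mem_inf.mpr ⟨mul_mem (inv_mem k₀.2) q.1.1.2, ?_⟩
      rw [hH]
      exact mul_mem h₀.2 (inv_mem q.1.2.2)
    case refine_2 =>
      show (k₀ : G) * (x : G) * ((x : G)⁻¹ * (h₀ : G)) = g
      rw [mul_assoc, mul_inv_cancel_left, hpg]
    case refine_3 =>
      have hq : (q.1.1 : G) * (q.1.2 : G) = g := q.2
      apply Subtype.ext
      apply Prod.ext
      · apply Subtype.ext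
        show (k₀ : G) * ((k₀ : G)⁻¹ * (q.1.1 : G)) = (q.1.1 : G)
        rw [mul_inv_cancel_left]
      · apply Subtype.ext
        show ((k₀ : G)⁻¹ * (q.1.1 : G))⁻¹ * (h₀ : G) = (q.1.2 : G)
        rw [mul_inv_rev, inv_inv, mul_assoc, hpg, inv_mul_eq_iff_eq_mul]
        exact hq.symm
    case refine_4 =>
      apply Subtype.ext
      show (k₀ : G)⁻¹ * ((k₀ : G) * (x : G)) = (x : G)
      rw [inv_mul_cancel_left]
  have e1 : ∑ p : K × H, F (φ p) = Fintype.card ↥K • ∑ h : H, F h := by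
    rw [Fintype.sum_prod_type]
    calc ∑ k : K, ∑ h : H, F (φ (k, h)) = ∑ _k : K, ∑ h : H, F h :=
          Finset.sum_congr rfl fun k _ => Finset.sum_congr rfl fun h _ => hF k h
    _ = Fintype.card ↥K • ∑ h : H, F h := by
          rw [Finset.sum_const, Finset.card_univ]
  have e2 : ∑ p : K × H, F (φ p) = Fintype.card ↥(K ⊓ H) • ∑ g : G, F g := by
    rw [Finset.sum_comp]
    rw [Finset.image_univ_of_surjective hsurj, Finset.smul_sum]
    exact Finset.sum_congr rfl fun g _ => by rw [key g]
  calc (Nat.card ↥(K ⊓ H) : ℂ) * ∑ g : G, F g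
      = Fintype.card ↥(K ⊓ H) • ∑ g : G, F g := by
        rw [Nat.card_eq_fintype_card, nsmul_eq_mul]
  _ = ∑ p : K × H, F (φ p) := e2.symm
  _ = Fintype.card ↥K • ∑ h : H, F h := e1
  _ = (Nat.card ↥K : ℂ) * ∑ h : H, F h := by rw [Nat.card_eq_fintype_card, nsmul_eq_mul]

end AuxiliaryLemmas

/-- Uniqueness (Lemma 6.8 of Navarro's book): if G = KH with K ⊴ G, χ, τ ∈ Irr(G)
contain K in their kernels, χ_H = θ is irreducible, and θ is a constituent of τ_H,
then τ = χ. -/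
theorem eq_of_res_constituent
    (G : Type) [Group G] [Fintype G]
    (K : Subgroup G) (hKn : K.Normal) (H : Subgroup G) (hKH : K ⊔ H = ⊤)
    (χ τ : IrrRep ℂ G) (hKχ : K ≤ χ.ker) (hKτ : K ≤ τ.ker)
    (θ : IrrRep ℂ H)
    (hres : ∀ h : H, χ.char (h : G) = θ.char h)
    (hconst : innerChar H (fun h : H => τ.char (h : G)) θ.char ≠ 0) :
    τ.char = χ.char := by
  classical
  haveI : Fintype ↥K := Fintype.ofFinite _
  haveI : Fintype ↥H := Fintype.ofFinite _
  -- characters containing `K` in the kernel are invariant under left `K`-translation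
  have hker : ∀ (W : IrrRep ℂ G), K ≤ W.ker → ∀ (kk : K) (g : G),
      W.char ((kk : G) * g) = W.char g := by
    intro W hKW kk g
    have h1 : W.ρ (kk : G) = 1 := by
      have h2 := hKW kk.2
      rw [IrrRep.ker, MonoidHom.mem_ker] at h2
      have h3 := congrArg Units.val h2
      rwa [Representation.asGroupHom_apply] at h3
    show LinearMap.trace ℂ W.V (W.ρ ((kk : G) * g)) = LinearMap.trace ℂ W.V (W.ρ g)
    rw [map_mul, h1, one_mul]
  set F : G → ℂ := fun g => τ.char g * (starRingEnd ℂ) (χ.char g) with hFdef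
  have hF : ∀ (kk : K) (hh : H), F ((kk : G) * (hh : G)) = F hh := fun kk hh => by
    rw [hFdef]
    simp only
    rw [hker τ hKτ, hker χ hKχ]
  have hsumH : ∑ h : H, F (h : G) ≠ 0 := by
    intro h0
    apply hconst
    rw [innerChar, finsum_eq_sum_of_fintype]
    have h1 : ∑ h : H, τ.char (h : G) * (starRingEnd ℂ) (θ.char h) = 0 := by
      rw [← h0]
      refine Finset.sum_congr rfl fun h _ => ?_
      rw [hFdef]
      simp only
      rw [hres h]
    rw [h1, mul_zero]
  have hsumG : ∑ g : G, F g ≠ 0 := by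
    have hcount := card_inf_mul_sum_eq K H hKn hKH F hF
    intro h0
    rw [h0, mul_zero] at hcount
    have h1 : (Nat.card ↥K : ℂ) ≠ 0 := by
      rw [Nat.cast_ne_zero, Nat.card_eq_fintype_card]
      exact Fintype.card_ne_zero
    have h2 := (mul_eq_zero.mp hcount.symm).resolve_left h1
    exact hsumH h2
  have hsumG' : ∑ g : G, τ.char g * χ.char g⁻¹ ≠ 0 := by
    intro h0
    apply hsumG
    rw [← h0]
    refine Finset.sum_congr rfl fun g _ => ?_
    rw [hFdef]
    simp only
    rw [IrrRep.star_char]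
  letI : Fintype G := ‹Fintype G›
  letI : Invertible ((Nat.card G : ℂ)) :=
    invertibleOfNonzero (Nat.cast_ne_zero.mpr Nat.card_pos.ne')
  haveI hS1 : CategoryTheory.Simple (FDRep.of τ.ρ : FDRep ℂ G) := τ.simple_fdRep
  haveI hS2 : CategoryTheory.Simple (FDRep.of χ.ρ : FDRep ℂ G) := χ.simple_fdRep
  have horth := FDRep.char_orthonormal (k := ℂ) (G := G)
    (FDRep.of τ.ρ) (FDRep.of χ.ρ)
  have hchar1 : ∀ g : G, (FDRep.of τ.ρ : FDRep ℂ G).character g = τ.char g :=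
    fun g => rfl
  have hchar2 : ∀ g : G, (FDRep.of χ.ρ : FDRep ℂ G).character g = χ.char g :=
    fun g => rfl
  by_cases hiso :
      Nonempty ((FDRep.of τ.ρ : FDRep ℂ G) ≅ (FDRep.of χ.ρ : FDRep ℂ G))
  · obtain ⟨i⟩ := hiso
    have hci := FDRep.char_iso i
    funext g
    have hcg := congrFun hci g
    rw [hchar1, hchar2] at hcg
    exact hcg
  · exfalso
    rw [if_neg hiso] at horth
    apply hsumG'
    letI : Invertible ((Fintype.card G : ℂ)) :=
      invertibleOfNonzero (Nat.cast_ne_zero.mpr Fintype.card_ne_zero)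
    have h5a : (⅟(Nat.card G : ℂ)) • ∑ g : G,
        (FDRep.of τ.ρ : FDRep ℂ G).character g *
        (FDRep.of χ.ρ : FDRep ℂ G).character g⁻¹ = (0 : ℂ) := horth
    have h5 : (⅟(Fintype.card G : ℂ)) • ∑ g : G, τ.char g * χ.char g⁻¹ = (0 : ℂ) := by
      have h5b : (Nat.card G : ℂ)⁻¹ • ∑ g : G, τ.char g * χ.char g⁻¹ = (0 : ℂ) := h5a
      rwa [Nat.card_eq_fintype_card, ← invOf_eq_inv] at h5b
    have h6 := congrArg (fun z => (Fintype.card G : ℂ) • z) h5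
    simp only [smul_smul, mul_invOf_self, one_smul, Nat.cast_zero, smul_zero] at h6
    exact h6
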